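/- The limit shape of the FPP model on a periodically realized crystal lattice depends only on the graph, the time distribution and the period: if (Φ,ρ) and (Φ′,ρ′) are two periodic realizations of the same d-dimensional crystal lattice X with ρ = ρ′, and the time distribution ν satisfies E[min{t₁,…,t_{l_X}}^d] < ∞, then the limit shapes coincide: B_Φ = B_{Φ′}. -/

import Mathlib

open MeasureTheory ProbabilityTheory Filter Topology Pointwise

namespace FPPCL

/-- A multigraph: loops and parallel edges allowed. Edges are unoriented,
recorded by their (unordered) pair of endpoints. -/
structure Multigraph where
  V : Type
  E : Type
  ends : E → Sym2 V

namespace Multigraph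

/-- A walk in a multigraph, recorded as a sequence of edges together with
compatible endpoints. -/
inductive Walk (G : Multigraph) : G.V → G.V → Type
  | nil (v : G.V) : Walk G v v
  | cons {u v w : G.V} (e : G.E) (h : G.ends e = s(u, v)) (p : Walk G v w) : Walk G u w

/-- The list of edges traversed by a walk. -/
def Walk.edges {G : Multigraph} : {u v : G.V} → G.Walk u v → List G.E
  | _, _, .nil _ => []
  | _, _, .cons e _ p => e :: Walk.edges p

/-- A multigraph is connected if any two vertices are joined by a walk. -/
def Connected (G : Multigraph) : Prop := ∀ x y : G.V, Nonempty (G.Walk x y)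

/-- A finite set of edges separates the graph if some pair of vertices cannot be
joined by a walk avoiding it. -/
def Separates (G : Multigraph) (S : Finset G.E) : Prop :=
  ∃ x y : G.V, ∀ p : G.Walk x y, ∃ e ∈ p.edges, e ∈ S

/-- The edge connectivity: the minimal size of a separating set of edges. -/
noncomputable def edgeConn (G : Multigraph) : ℕ :=
  sInf {n | ∃ S : Finset G.E, S.card = n ∧ G.Separates S}

end Multigraph

/-- The passage time of a walk for a configuration `t` of edge times. -/
noncomputable def walkTime {G : Multigraph} (t : G.E → NNReal) {u v : G.V}
    (p : G.Walk u v) : NNReal :=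
  (p.edges.map t).sum

/-- The first passage time between two vertices: the infimum of passage times over
all walks joining them (`∞` if there is none). -/
noncomputable def fpt {G : Multigraph} (t : G.E → NNReal) (u v : G.V) : ENNReal :=
  ⨅ p : G.Walk u v, (walkTime t p : ENNReal)

/-- A crystal structure of dimension `d` on a multigraph: a free action of the free
abelian group `ℤ^d` by graph automorphisms with finite quotient graph. -/
structure CrystalStructure (d : ℕ) (G : Multigraph) where
  vact : (Fin d → ℤ) → G.V → G.V
  eact : (Fin d → ℤ) → G.E → G.E
  vact_zero : ∀ x, vact 0 x = x
  vact_add : ∀ σ τ x, vact (σ + τ) x = vact σ (vact τ x)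
  eact_zero : ∀ e, eact 0 e = e
  eact_add : ∀ σ τ e, eact (σ + τ) e = eact σ (eact τ e)
  ends_eact : ∀ σ e, G.ends (eact σ e) = (G.ends e).map (vact σ)
  free : ∀ σ x, vact σ x = x → σ = 0
  conn : G.Connected
  finV : Finite (Quot fun x y : G.V => ∃ σ, vact σ x = y)
  finE : Finite (Quot fun e f : G.E => ∃ σ, eact σ e = f)

/-- A periodic realization of a `d`-dimensional crystal lattice: a placement of the
vertices in `ℝ^d` that is equivariant, via an injective period homomorphism `ρ` onto
a lattice group (spanned over `ℤ` by a basis of `ℝ^d`), with the crystal action. -/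
structure PeriodicRealization (d : ℕ) (G : Multigraph) (C : CrystalStructure d G) where
  Φ : G.V → EuclideanSpace ℝ (Fin d)
  basis : Module.Basis (Fin d) ℝ (EuclideanSpace ℝ (Fin d))
  periodic : ∀ σ x, Φ (C.vact σ x) = Φ x + ∑ i, (σ i : ℝ) • basis i

namespace PeriodicRealization

variable {d : ℕ} {G : Multigraph} {C : CrystalStructure d G}

/-- The period homomorphism `ρ : L → ℝ^d` of a periodic realization. -/
noncomputable def ρ (R : PeriodicRealization d G C) (σ : Fin d → ℤ) :
    EuclideanSpace ℝ (Fin d) :=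
  ∑ i, (σ i : ℝ) • R.basis i

/-- The lattice group `Γ = ρ(L)`. -/
def Γ (R : PeriodicRealization d G C) : Set (EuclideanSpace ℝ (Fin d)) :=
  Set.range R.ρ

/-- A realization is nondegenerate if it is injective on vertices. -/
def Nondegenerate (R : PeriodicRealization d G C) : Prop :=
  Function.Injective R.Φ

/-- The set `D` of rational points: points with some positive integer multiple in `Γ`. -/
def ratPoints (R : PeriodicRealization d G C) : Set (EuclideanSpace ℝ (Fin d)) :=
  {x | ∃ N : ℕ, 0 < N ∧ (N : ℝ) • x ∈ R.Γ}

/-- `v` is a realized vertex closest to the point `x`. -/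
def IsClosest (R : PeriodicRealization d G C) (x : EuclideanSpace ℝ (Fin d))
    (v : G.V) : Prop :=
  ∀ w : G.V, dist (R.Φ v) x ≤ dist (R.Φ w) x

end PeriodicRealization

/-- The `k`-th moment of the minimum of `l` i.i.d. random times with distribution `ν`. -/
noncomputable def minMoment (ν : Measure NNReal) (l k : ℕ) : ENNReal :=
  ∫⁻ f, (⨅ i : Fin l, (f i : ENNReal)) ^ k ∂(Measure.pi fun _ : Fin l => ν)

/-- The `L¹`-norm of a point of `ℝ^d`. -/
noncomputable def l1 {d : ℕ} (x : EuclideanSpace ℝ (Fin d)) : ℝ := ∑ i, |x i|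

/-- In a bond configuration `η`, the open cluster of `x` is infinite. -/
def PercolatesFrom {G : Multigraph} (η : G.E → Prop) (x : G.V) : Prop :=
  {y : G.V | ∃ p : G.Walk x y, ∀ e ∈ p.edges, η e}.Infinite

/-- The critical probability of Bernoulli bond percolation on a multigraph: the
supremum of the parameters `p` for which every i.i.d. Bernoulli(`p`) bond
configuration almost surely has no infinite cluster. -/
noncomputable def bondPc (G : Multigraph) : ℝ :=
  sSup {p : ℝ | 0 ≤ p ∧ p ≤ 1 ∧
    ∀ (Ω : Type) (_ : MeasureSpace Ω), IsProbabilityMeasure (volume : Measure Ω) →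
    ∀ η : G.E → Ω → Bool,
      iIndepFun η (volume : Measure Ω) →
      (∀ e, volume {ω | η e ω = true} = ENNReal.ofReal p) →
      volume {ω | ∃ x : G.V, PercolatesFrom (fun e => η e ω = true) x} = 0}

end FPPCL

namespace FPPCL
namespace Multigraph

variable {G : Multigraph}

def Walk.append : {u v w : G.V} → G.Walk u v → G.Walk v w → G.Walk u w
  | _, _, _, .nil _, q => q
  | _, _, _, .cons e h p, q => .cons e h (p.append q)

lemma Walk.edges_append {u v w : G.V} (p : G.Walk u v) (q : G.Walk v w) :
    (p.append q).edges = p.edges ++ q.edges := by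
  induction p with
  | nil => rfl
  | cons e h p ih => simp [Walk.append, Walk.edges, ih]

def Walk.reverse : {u v : G.V} → G.Walk u v → G.Walk v u
  | _, _, .nil v => .nil v
  | u, _, .cons e h p => p.reverse.append (.cons e (by rw [h, Sym2.eq_swap]) (.nil u))

lemma Walk.edges_reverse {u v : G.V} (p : G.Walk u v) :
    p.reverse.edges = p.edges.reverse := by
  induction p with
  | nil => rfl
  | cons e h p ih => simp [Walk.reverse, Walk.edges, Walk.edges_append, ih]

lemma Walk.edges_injective {u v : G.V} (p q : G.Walk u v) (hpq : p.edges = q.edges) :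
    p = q := by
  induction p with
  | nil v =>
    cases q with
    | nil => rfl
    | cons e h r => simp [Walk.edges] at hpq
  | cons e h p ih =>
    cases q with
    | nil => simp [Walk.edges] at hpq
    | cons f h2 r =>
      simp only [Walk.edges, List.cons.injEq] at hpq
      obtain ⟨rfl, hq⟩ := hpq
      rw [h] at h2
      have hv := Sym2.congr_right.mp h2
      subst hv
      rw [ih r hq]

instance Walk.countable [Countable G.E] (u v : G.V) : Countable (G.Walk u v) := by
  have : Function.Injective (fun p : G.Walk u v => p.edges) := fun p q h =>
    Walk.edges_injective p q h
  exact Function.Injective.countable this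

end Multigraph

open Multigraph

variable {G : Multigraph}

lemma walkTime_nil (t : G.E → NNReal) (v : G.V) : walkTime t (Walk.nil v) = 0 := rfl

lemma walkTime_append (t : G.E → NNReal) {u v w : G.V} (p : G.Walk u v) (q : G.Walk v w) :
    walkTime t (p.append q) = walkTime t p + walkTime t q := by
  simp [walkTime, Walk.edges_append]

lemma walkTime_reverse (t : G.E → NNReal) {u v : G.V} (p : G.Walk u v) :
    walkTime t p.reverse = walkTime t p := by
  simp [walkTime, Walk.edges_reverse, List.map_reverse, List.sum_reverse]

lemma fpt_le_walkTime (t : G.E → NNReal) {u v : G.V} (p : G.Walk u v) :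
    fpt t u v ≤ (walkTime t p : ENNReal) :=
  iInf_le _ p

lemma fpt_self (t : G.E → NNReal) (u : G.V) : fpt t u u = 0 :=
  le_antisymm (by simpa [walkTime_nil] using fpt_le_walkTime t (Walk.nil u)) (by simp)

lemma fpt_symm_le (t : G.E → NNReal) (u v : G.V) : fpt t u v ≤ fpt t v u :=
  le_iInf fun q => by
    simpa [walkTime_reverse] using fpt_le_walkTime t q.reverse

lemma fpt_symm (t : G.E → NNReal) (u v : G.V) : fpt t u v = fpt t v u :=
  le_antisymm (fpt_symm_le t u v) (fpt_symm_le t v u)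

lemma fpt_triangle (t : G.E → NNReal) (u v w : G.V) :
    fpt t u w ≤ fpt t u v + fpt t v w := by
  have h : ∀ (p : G.Walk u v) (q : G.Walk v w),
      fpt t u w ≤ (walkTime t p : ENNReal) + (walkTime t q : ENNReal) := by
    intro p q
    have := fpt_le_walkTime t (p.append q)
    rwa [walkTime_append, ENNReal.coe_add] at this
  simp only [fpt, ENNReal.iInf_add, ENNReal.add_iInf]
  exact le_iInf fun q => le_iInf fun p => h p q

lemma fpt_ne_top (t : G.E → NNReal) {u v : G.V} (hn : Nonempty (G.Walk u v)) :
    fpt t u v ≠ ⊤ := by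
  obtain ⟨p⟩ := hn
  exact ne_top_of_le_ne_top ENNReal.coe_ne_top (fpt_le_walkTime t p)

lemma measurable_listSum (l : List G.E) :
    Measurable fun t : G.E → NNReal => (l.map t).sum := by
  induction l with
  | nil => simp only [List.map_nil]; exact measurable_const
  | cons e l ih =>
    simp only [List.map_cons, List.sum_cons]
    exact (measurable_pi_apply e).add ih

lemma measurable_walkTime {u v : G.V} (p : G.Walk u v) :
    Measurable fun t : G.E → NNReal => walkTime t p :=
  measurable_listSum p.edges

lemma measurable_fpt [Countable G.E] (u v : G.V) :
    Measurable fun t : G.E → NNReal => fpt t u v :=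
  Measurable.iInf fun p => (measurable_walkTime p).coe_nnreal_ennreal

end FPPCL
namespace FPPCL
open Multigraph

variable {d : ℕ} {G : Multigraph} {C : CrystalStructure d G}

namespace CrystalStructure

lemma vact_cancel (C : CrystalStructure d G) (σ : Fin d → ℤ) (x : G.V) :
    C.vact (-σ) (C.vact σ x) = x := by
  rw [← C.vact_add, neg_add_cancel, C.vact_zero]

lemma eact_cancel (C : CrystalStructure d G) (σ : Fin d → ℤ) (e : G.E) :
    C.eact (-σ) (C.eact σ e) = e := by
  rw [← C.eact_add, neg_add_cancel, C.eact_zero]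

lemma vact_equiv (C : CrystalStructure d G) :
    Equivalence (fun x y : G.V => ∃ σ, C.vact σ x = y) := by
  constructor
  · exact fun x => ⟨0, C.vact_zero x⟩
  · rintro x y ⟨σ, rfl⟩; exact ⟨-σ, C.vact_cancel σ x⟩
  · rintro x y z ⟨σ, rfl⟩ ⟨τ, rfl⟩; exact ⟨τ + σ, C.vact_add τ σ x⟩

lemma eact_equiv (C : CrystalStructure d G) :
    Equivalence (fun e f : G.E => ∃ σ, C.eact σ e = f) := by
  constructor
  · exact fun e => ⟨0, C.eact_zero e⟩
  · rintro e f ⟨σ, rfl⟩; exact ⟨-σ, C.eact_cancel σ e⟩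
  · rintro e f g ⟨σ, rfl⟩ ⟨τ, rfl⟩; exact ⟨τ + σ, C.eact_add τ σ e⟩

lemma rel_out_vact (C : CrystalStructure d G) (x : G.V) :
    ∃ σ, C.vact σ (Quot.mk (fun x y : G.V => ∃ σ, C.vact σ x = y) x).out = x := by
  have h := Quot.out_eq (Quot.mk (fun x y : G.V => ∃ σ, C.vact σ x = y) x)
  rw [Quot.eq] at h
  exact (C.vact_equiv.eqvGen_iff).mp h

lemma rel_out_eact (C : CrystalStructure d G) (e : G.E) :
    ∃ σ, C.eact σ (Quot.mk (fun e f : G.E => ∃ σ, C.eact σ e = f) e).out = e := by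
  have h := Quot.out_eq (Quot.mk (fun e f : G.E => ∃ σ, C.eact σ e = f) e)
  rw [Quot.eq] at h
  exact (C.eact_equiv.eqvGen_iff).mp h

lemma countable_E (C : CrystalStructure d G) : Countable G.E := by
  haveI : Finite (Quot fun e f : G.E => ∃ σ, C.eact σ e = f) := C.finE
  have hsurj : Function.Surjective
      (fun p : (Quot fun e f : G.E => ∃ σ, C.eact σ e = f) × (Fin d → ℤ) =>
        C.eact p.2 p.1.out) := by
    intro e
    obtain ⟨σ, hσ⟩ := C.rel_out_eact e
    exact ⟨(Quot.mk _ e, σ), hσ⟩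
  exact hsurj.countable

end CrystalStructure

/-- Translation of walks by the crystal action. -/
def actWalk (C : CrystalStructure d G) (σ : Fin d → ℤ) :
    ∀ {u v : G.V}, G.Walk u v → G.Walk (C.vact σ u) (C.vact σ v)
  | _, _, .nil v => .nil _
  | _, _, .cons e h p =>
      .cons (C.eact σ e) (by rw [C.ends_eact, h, Sym2.map_pair_eq]) (actWalk C σ p)

lemma edges_actWalk (C : CrystalStructure d G) (σ : Fin d → ℤ) {u v : G.V}
    (p : G.Walk u v) : (actWalk C σ p).edges = p.edges.map (C.eact σ) := by
  induction p with
  | nil => rfl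
  | cons e h p ih => simp [actWalk, Walk.edges, ih]

lemma walkTime_actWalk (C : CrystalStructure d G) (σ : Fin d → ℤ) (t : G.E → NNReal)
    {u v : G.V} (p : G.Walk u v) :
    walkTime t (actWalk C σ p) = walkTime (fun e => t (C.eact σ e)) p := by
  simp [walkTime, edges_actWalk, List.map_map]; rfl

namespace PeriodicRealization

lemma rho_def (R : PeriodicRealization d G C) (σ : Fin d → ℤ) :
    R.ρ σ = ∑ i, (σ i : ℝ) • R.basis i := rfl

lemma periodic' (R : PeriodicRealization d G C) (σ : Fin d → ℤ) (x : G.V) :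
    R.Φ (C.vact σ x) = R.Φ x + R.ρ σ :=
  R.periodic σ x

lemma rho_neg (R : PeriodicRealization d G C) (σ : Fin d → ℤ) :
    R.ρ (-σ) = -R.ρ σ := by
  simp [rho_def, Finset.sum_neg_distrib]

lemma rho_nsmul (R : PeriodicRealization d G C) (k : ℕ) (σ : Fin d → ℤ) :
    R.ρ (k • σ) = (k : ℝ) • R.ρ σ := by
  simp only [rho_def, Finset.smul_sum, smul_smul]
  refine Finset.sum_congr rfl fun i _ => ?_
  have hk : (k • σ) i = (k : ℤ) * σ i := by
    simp [Pi.smul_apply]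
  rw [hk]
  congr 1
  push_cast
  ring

lemma rho_equivFun (R : PeriodicRealization d G C) (σ : Fin d → ℤ) :
    R.basis.equivFun (R.ρ σ) = fun i => (σ i : ℝ) := by
  rw [rho_def, ← Module.Basis.equivFun_symm_apply, LinearEquiv.apply_symm_apply]

/-- Key translation property of closest points. -/
lemma isClosest_translate (R : PeriodicRealization d G C)
    (y : EuclideanSpace ℝ (Fin d)) (τ : Fin d → ℤ) (v : G.V)
    (h : R.IsClosest (y + R.ρ τ) v) : R.IsClosest y (C.vact (-τ) v) := by
  have key : ∀ w : G.V, dist (R.Φ (C.vact (-τ) w)) y = dist (R.Φ w) (y + R.ρ τ) := by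
    intro w
    rw [R.periodic' (-τ) w, R.rho_neg, dist_eq_norm, dist_eq_norm]
    congr 1
    abel
  intro w
  rw [key v]
  have hw : dist (R.Φ w) y = dist (R.Φ (C.vact τ w)) (y + R.ρ τ) := by
    have := key (C.vact τ w)
    rw [C.vact_cancel] at this
    exact this
  rw [hw]
  exact h (C.vact τ w)

/-- Finiteness of the set of vertices realized in a ball. -/
lemma finite_ball (R : PeriodicRealization d G C) (y : EuclideanSpace ℝ (Fin d)) (D : ℝ) :
    {v : G.V | dist (R.Φ v) y ≤ D}.Finite := by
  classical
  haveI : Finite (Quot fun x y : G.V => ∃ σ, C.vact σ x = y) := C.finV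
  set L := R.basis.equivFunL with hL
  set Lc := (L : EuclideanSpace ℝ (Fin d) →L[ℝ] (Fin d → ℝ)) with hLc
  set K : (Quot fun x y : G.V => ∃ σ, C.vact σ x = y) → ℝ :=
    fun q => ‖Lc‖ * (D + ‖y‖ + ‖R.Φ q.out‖) with hK
  have hsub : {v : G.V | dist (R.Φ v) y ≤ D} ⊆
      ⋃ q : Quot fun x y : G.V => ∃ σ, C.vact σ x = y,
        (fun σ : Fin d → ℤ => C.vact σ q.out) ''
          {σ : Fin d → ℤ | ∀ i, |σ i| ≤ ⌈K q⌉} := by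
    intro v hv
    obtain ⟨σ, hσ⟩ := C.rel_out_vact v
    set q := Quot.mk (fun x y : G.V => ∃ σ, C.vact σ x = y) v with hq
    refine Set.mem_iUnion.mpr ⟨q, σ, fun i => ?_, hσ⟩
    have hΦ : R.Φ v = R.Φ q.out + R.ρ σ := by rw [← hσ, R.periodic']
    have hnorm : ‖R.ρ σ‖ ≤ D + ‖y‖ + ‖R.Φ q.out‖ := by
      have h1 : ‖R.ρ σ‖ = ‖(R.Φ v - y) + (y - R.Φ q.out)‖ := by
        congr 1
        rw [hΦ]; abel
      rw [h1]
      refine (norm_add_le _ _).trans ?_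
      have h2 : ‖R.Φ v - y‖ ≤ D := by rw [← dist_eq_norm]; exact hv
      have h3 : ‖y - R.Φ q.out‖ ≤ ‖y‖ + ‖R.Φ q.out‖ := norm_sub_le _ _
      linarith
    have hcoord : |(σ i : ℝ)| ≤ K q := by
      have h4 : (σ i : ℝ) = Lc (R.ρ σ) i := by
        have := R.rho_equivFun σ
        have h5 : Lc (R.ρ σ) = R.basis.equivFun (R.ρ σ) := rfl
        rw [h5, this]
      rw [h4]
      have h6 : |Lc (R.ρ σ) i| ≤ ‖Lc (R.ρ σ)‖ := by
        have := norm_le_pi_norm (Lc (R.ρ σ)) i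
        simpa [Real.norm_eq_abs] using this
      refine h6.trans ?_
      refine (Lc.le_opNorm _).trans ?_
      have hn0 : (0:ℝ) ≤ ‖Lc‖ := norm_nonneg _
      exact mul_le_mul_of_nonneg_left hnorm hn0
    have : ((|σ i| : ℤ) : ℝ) ≤ (⌈K q⌉ : ℝ) := by
      push_cast
      exact hcoord.trans (Int.le_ceil _)
    exact_mod_cast this
  refine Set.Finite.subset ?_ hsub
  refine Set.finite_iUnion fun q => Set.Finite.image _ ?_
  have : {σ : Fin d → ℤ | ∀ i, |σ i| ≤ ⌈K q⌉} ⊆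
      Set.pi Set.univ fun _ : Fin d => Set.Icc (-⌈K q⌉) ⌈K q⌉ := by
    intro σ hσ i _
    exact abs_le.mp (hσ i)
  exact Set.Finite.subset (Set.Finite.pi fun i => Set.finite_Icc _ _) this

end PeriodicRealization
end FPPCL
namespace FPPCL
open MeasureTheory ProbabilityTheory

lemma iIndepFun_precomp {Ω : Type*} [MeasurableSpace Ω] {μ : Measure Ω} {ι ι' β : Type*}
    [MeasurableSpace β] {f : ι → Ω → β} (g : ι' → ι) (hg : Function.Injective g)
    (h : iIndepFun f μ) :
    iIndepFun (fun i => f (g i)) μ := by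
  rw [iIndepFun_iff_measure_inter_preimage_eq_mul] at h ⊢
  intro S sets hsets
  classical
  set sets₁ : ι → Set β := fun i => ⋂ j ∈ S, ⋂ (_ : g j = i), sets j with hs1
  have hgj : ∀ j ∈ S, sets₁ (g j) = sets j := by
    intro j hj
    apply Set.Subset.antisymm
    · intro x hx
      have h1 := Set.mem_iInter₂.mp hx j hj
      exact Set.mem_iInter.mp h1 rfl
    · intro x hx
      refine Set.mem_iInter₂.mpr fun j' hj' => Set.mem_iInter.mpr fun hgj' => ?_
      obtain rfl := hg hgj'
      exact hx
  have hmeas₁ : ∀ i ∈ S.image g, MeasurableSet (sets₁ i) := by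
    intro i hi
    obtain ⟨j, hj, rfl⟩ := Finset.mem_image.mp hi
    rw [hgj j hj]
    exact hsets j hj
  have key := h (S.image g) hmeas₁
  rw [Finset.set_biInter_finset_image] at key
  rw [Finset.prod_image (fun j _ j' _ e => hg e)] at key
  have e1 : (⋂ j ∈ S, f (g j) ⁻¹' sets₁ (g j)) = ⋂ j ∈ S, f (g j) ⁻¹' sets j := by
    refine Set.iInter₂_congr fun j hj => ?_
    rw [hgj j hj]
  have e2 : ∀ j ∈ S, μ (f (g j) ⁻¹' sets₁ (g j)) = μ (f (g j) ⁻¹' sets j) := by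
    intro j hj; rw [hgj j hj]
  rw [e1] at key
  rw [Finset.prod_congr rfl e2] at key
  exact key

section ConfigLaw

variable {E : Type} {Ω : Type} [MeasureSpace Ω]
  (ν : Measure NNReal) [IsProbabilityMeasure ν]

/-- The configuration map of a family of edge times. -/
def configMap (te : E → Ω → NNReal) (ω : Ω) : E → NNReal := fun e => te e ω

lemma measurable_configMap {te : E → Ω → NNReal} (hmeas : ∀ e, Measurable (te e)) :
    Measurable (configMap te) :=
  measurable_pi_lambda _ fun e => hmeas e

/-- The joint law of finitely many of the times is the product measure. -/
lemma map_restrict_eq_pi {te : E → Ω → NNReal} (hmeas : ∀ e, Measurable (te e))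
    (hindep : iIndepFun te (volume : Measure Ω))
    (hident : ∀ e, Measure.map (te e) (volume : Measure Ω) = ν) (s : Finset E) :
    Measure.map (fun ω => s.restrict (configMap te ω)) (volume : Measure Ω)
      = Measure.pi (fun _ : s => ν) := by
  classical
  refine (Measure.pi_eq fun B hB => ?_).symm
  have hmr : Measurable (fun ω => s.restrict (configMap te ω)) :=
    measurable_pi_lambda _ fun e => hmeas e
  rw [Measure.map_apply hmr (MeasurableSet.univ_pi hB)]
  set B' : E → Set NNReal := fun e => if h : e ∈ s then B ⟨e, h⟩ else Set.univ with hB'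
  have hpre : (fun ω => s.restrict (configMap te ω)) ⁻¹' Set.pi Set.univ B
      = ⋂ e ∈ s, te e ⁻¹' B' e := by
    ext ω
    simp only [Set.mem_preimage, Set.mem_pi, Set.mem_univ, forall_true_left,
      Set.mem_iInter]
    constructor
    · intro h e he
      have := h ⟨e, he⟩
      simp only [hB', dif_pos he]
      exact this
    · intro h e
      have := h e.1 e.2
      simp only [hB', dif_pos e.2] at this
      exact this
  rw [hpre]
  have hB'meas : ∀ e, e ∈ s → MeasurableSet (B' e) := by
    intro e he
    simp only [hB', dif_pos he]
    exact hB ⟨e, he⟩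
  rw [hindep.measure_inter_preimage_eq_mul s hB'meas]
  have : ∀ e ∈ s, volume (te e ⁻¹' B' e) = ν (B' e) := by
    intro e he
    rw [← hident e, Measure.map_apply (hmeas e) (hB'meas e he)]
  rw [Finset.prod_congr rfl this]
  rw [← Finset.prod_attach s fun e => ν (B' e)]
  refine Finset.prod_congr rfl fun e _ => ?_
  simp only [hB', dif_pos e.2]

/-- Uniqueness of the law of an i.i.d. family of edge times. -/
lemma map_configMap_eq [IsProbabilityMeasure (volume : Measure Ω)]
    {Ω' : Type} [MeasureSpace Ω'] [IsProbabilityMeasure (volume : Measure Ω')]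
    {te : E → Ω → NNReal} (hmeas : ∀ e, Measurable (te e))
    (hindep : iIndepFun te (volume : Measure Ω))
    (hident : ∀ e, Measure.map (te e) (volume : Measure Ω) = ν)
    {te' : E → Ω' → NNReal} (hmeas' : ∀ e, Measurable (te' e))
    (hindep' : iIndepFun te' (volume : Measure Ω'))
    (hident' : ∀ e, Measure.map (te' e) (volume : Measure Ω') = ν) :
    Measure.map (configMap te) (volume : Measure Ω)
      = Measure.map (configMap te') (volume : Measure Ω') := by
  haveI : IsProbabilityMeasure (Measure.map (configMap te) (volume : Measure Ω)) :=
    Measure.isProbabilityMeasure_map (measurable_configMap hmeas).aemeasurable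
  haveI : IsProbabilityMeasure (Measure.map (configMap te') (volume : Measure Ω')) :=
    Measure.isProbabilityMeasure_map (measurable_configMap hmeas').aemeasurable
  refine ext_of_generate_finite _ generateFrom_measurableCylinders.symm
    isPiSystem_measurableCylinders (fun A hA => ?_) ?_
  · obtain ⟨s, S, hS, rfl⟩ := (mem_measurableCylinders A).mp hA
    rw [Measure.map_apply (measurable_configMap hmeas) (hS.cylinder),
      Measure.map_apply (measurable_configMap hmeas') (hS.cylinder)]
    have h1 : configMap te ⁻¹' cylinder s S
        = (fun ω => s.restrict (configMap te ω)) ⁻¹' S := rfl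
    have h2 : configMap te' ⁻¹' cylinder s S
        = (fun ω => s.restrict (configMap te' ω)) ⁻¹' S := rfl
    rw [h1, h2]
    have hmr1 : Measurable (fun ω => s.restrict (configMap te ω)) :=
      measurable_pi_lambda _ fun e => hmeas e
    have hmr2 : Measurable (fun ω => s.restrict (configMap te' ω)) :=
      measurable_pi_lambda _ fun e => hmeas' e
    calc (volume : Measure Ω) ((fun ω => s.restrict (configMap te ω)) ⁻¹' S)
        = Measure.map (fun ω => s.restrict (configMap te ω)) (volume : Measure Ω) S :=
          (Measure.map_apply hmr1 hS).symm
      _ = Measure.pi (fun _ : s => ν) S := by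
          rw [map_restrict_eq_pi ν hmeas hindep hident s]
      _ = Measure.map (fun ω => s.restrict (configMap te' ω)) (volume : Measure Ω') S := by
          rw [map_restrict_eq_pi ν hmeas' hindep' hident' s]
      _ = (volume : Measure Ω') ((fun ω => s.restrict (configMap te' ω)) ⁻¹' S) :=
          Measure.map_apply hmr2 hS
  · simp

end ConfigLaw
end FPPCL
namespace FPPCL
open MeasureTheory ProbabilityTheory Filter Topology Multigraph

lemma measure_config_preimage_eq {E : Type} {Ω : Type} [MeasureSpace Ω]
    [IsProbabilityMeasure (volume : Measure Ω)]
    {Ω' : Type} [MeasureSpace Ω'] [IsProbabilityMeasure (volume : Measure Ω')]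
    (ν : Measure NNReal) [IsProbabilityMeasure ν]
    {te : E → Ω → NNReal} (hmeas : ∀ e, Measurable (te e))
    (hindep : iIndepFun te (volume : Measure Ω))
    (hident : ∀ e, Measure.map (te e) (volume : Measure Ω) = ν)
    {te' : E → Ω' → NNReal} (hmeas' : ∀ e, Measurable (te' e))
    (hindep' : iIndepFun te' (volume : Measure Ω'))
    (hident' : ∀ e, Measure.map (te' e) (volume : Measure Ω') = ν)
    {A : Set (E → NNReal)} (hA : MeasurableSet A) :
    (volume : Measure Ω) (configMap te ⁻¹' A)
      = (volume : Measure Ω') (configMap te' ⁻¹' A) := by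
  rw [← Measure.map_apply (measurable_configMap hmeas) hA,
    ← Measure.map_apply (measurable_configMap hmeas') hA,
    map_configMap_eq ν hmeas hindep hident hmeas' hindep' hident']

/-- Tail probabilities of a finite random variable tend to zero. -/
lemma tendsto_measure_gt {Ω : Type} [MeasureSpace Ω]
    [IsProbabilityMeasure (volume : Measure Ω)] (Z : Ω → NNReal) (hZ : Measurable Z) :
    Tendsto (fun m : ℕ => (volume : Measure Ω) {ω | (m : ℝ) < (Z ω : ℝ)}) atTop (𝓝 0) := by
  have hmeas : ∀ m : ℕ, NullMeasurableSet {ω : Ω | (m : ℝ) < (Z ω : ℝ)} volume := fun m =>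
    (measurableSet_lt measurable_const hZ.coe_nnreal_real).nullMeasurableSet
  have hanti : Antitone fun m : ℕ => {ω : Ω | (m : ℝ) < (Z ω : ℝ)} := by
    intro m m' hmm' ω hω
    exact lt_of_le_of_lt (show (m:ℝ) ≤ (m':ℝ) by exact_mod_cast hmm') hω
  have hfin : ∃ m : ℕ, (volume : Measure Ω) {ω : Ω | (m : ℝ) < (Z ω : ℝ)} ≠ ⊤ :=
    ⟨0, measure_ne_top _ _⟩
  have h := tendsto_measure_iInter_atTop hmeas hanti hfin
  have hempty : (⋂ m : ℕ, {ω : Ω | (m : ℝ) < (Z ω : ℝ)}) = ∅ := by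
    ext ω
    simp only [Set.mem_iInter, Set.mem_setOf_eq, Set.mem_empty_iff_false, iff_false, not_forall,
      not_lt]
    obtain ⟨m, hm⟩ := exists_nat_gt (Z ω : ℝ)
    exact ⟨m, hm.le⟩
  rw [hempty] at h
  simpa [Function.comp_def] using h

lemma toReal_le_add3 {A B C D : ENNReal} (h : A ≤ B + C + D)
    (hB : B ≠ ⊤) (hC : C ≠ ⊤) (hD : D ≠ ⊤) :
    A.toReal ≤ B.toReal + C.toReal + D.toReal := by
  have hBC : B + C ≠ ⊤ := by
    simp [ENNReal.add_ne_top, hB, hC]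
  have hsum : B + C + D ≠ ⊤ := by
    simp [ENNReal.add_ne_top, hBC, hD]
  have h2 := ENNReal.toReal_mono hsum h
  rwa [ENNReal.toReal_add hBC hD, ENNReal.toReal_add hB hC] at h2

lemma round_div_tendsto (c : ℝ) :
    Tendsto (fun n : ℕ => ((round ((n + 1 : ℝ) * c) : ℤ) : ℝ) / (n + 1 : ℝ))
      atTop (𝓝 c) := by
  have hb : Tendsto (fun n : ℕ => (1 / 2) / (n + 1 : ℝ)) atTop (𝓝 0) := by
    apply Tendsto.div_atTop tendsto_const_nhds
    exact tendsto_atTop_add_const_right atTop 1 tendsto_natCast_atTop_atTop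
  rw [← tendsto_sub_nhds_zero_iff]
  refine squeeze_zero_norm (fun n => ?_) hb
  have hpos : (0:ℝ) < (n + 1 : ℝ) := by positivity
  have hne : (n + 1 : ℝ) ≠ 0 := ne_of_gt hpos
  have h2 : (((round ((n + 1 : ℝ) * c) : ℤ) : ℝ) - (n + 1 : ℝ) * c) / (n + 1 : ℝ)
      = ((round ((n + 1 : ℝ) * c) : ℤ) : ℝ) / (n + 1 : ℝ) - c := by
    rw [sub_div, mul_div_cancel_left₀ _ hne]
  rw [Real.norm_eq_abs, ← h2, abs_div, abs_of_pos hpos, abs_sub_comm]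
  gcongr
  exact abs_sub_round _

/-- Rational points are dense (sequentially). -/
lemma ratPoints_dense {d : ℕ} {G : Multigraph} {C : CrystalStructure d G}
    (R : PeriodicRealization d G C) (y : EuclideanSpace ℝ (Fin d)) :
    ∃ f : ℕ → EuclideanSpace ℝ (Fin d),
      (∀ n, f n ∈ R.ratPoints) ∧ Tendsto f atTop (𝓝 y) := by
  classical
  set L := R.basis.equivFunL with hLdef
  refine ⟨fun n => ((n : ℝ) + 1)⁻¹ • R.ρ (fun i => round ((n + 1 : ℝ) * L y i)),
    fun n => ?_, ?_⟩
  · refine ⟨n + 1, Nat.succ_pos n, ⟨fun i => round ((n + 1 : ℝ) * L y i), ?_⟩⟩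
    rw [show ((n + 1 : ℕ) : ℝ) = (n : ℝ) + 1 by push_cast; ring]
    rw [smul_inv_smul₀ (by positivity)]
  · have hfn : ∀ n : ℕ, ((n : ℝ) + 1)⁻¹ • R.ρ (fun i => round ((n + 1 : ℝ) * L y i))
        = L.symm (fun i => ((round ((n + 1 : ℝ) * L y i) : ℤ) : ℝ) / ((n : ℝ) + 1)) := by
      intro n
      have hsymm : (L.symm (fun i => ((round ((n + 1 : ℝ) * L y i) : ℤ) : ℝ) / ((n : ℝ) + 1)))
          = R.basis.equivFun.symm
              (fun i => ((round ((n + 1 : ℝ) * L y i) : ℤ) : ℝ) / ((n : ℝ) + 1)) := rfl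
      rw [hsymm, Module.Basis.equivFun_symm_apply, PeriodicRealization.rho_def, Finset.smul_sum]
      refine Finset.sum_congr rfl fun i _ => ?_
      rw [smul_smul, div_eq_inv_mul]
    have hcoord : Tendsto
        (fun n : ℕ => fun i => ((round ((n + 1 : ℝ) * L y i) : ℤ) : ℝ) / ((n : ℝ) + 1))
        atTop (𝓝 (L y)) := by
      rw [tendsto_pi_nhds]
      intro i
      exact round_div_tendsto (L y i)
    have hLy : L.symm (L y) = y := L.symm_apply_apply y
    have := (L.symm.continuous.tendsto (L y)).comp hcoord
    rw [hLy] at this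
    refine this.congr fun n => ?_
    exact (hfn n).symm

end FPPCL

namespace FPPCL

/-- the limit shape depends only on the graph, the time
distribution and the period: if `(Φ,ρ)` and `(Φ′,ρ′)` are periodic realizations of
the same crystal lattice with `ρ = ρ′`, and `E[min{t₁,…,t_{l_X}}^d] < ∞`, then the
limit shapes coincide: `B_Φ = B_{Φ′}`. -/
theorem limit_shape_depends_only_on_period
    {d : ℕ} (G : Multigraph) (C : CrystalStructure d G)
    (R R' : PeriodicRealization d G C) (hρ : R.ρ = R'.ρ)
    (hnd : R.Nondegenerate) (hnd' : R'.Nondegenerate)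
    (v₀ : G.V) (hv₀ : R.Φ v₀ = 0) (v₀' : G.V) (hv₀' : R'.Φ v₀' = 0)
    {Ω : Type} [MeasureSpace Ω] [IsProbabilityMeasure (volume : Measure Ω)]
    {Ω' : Type} [MeasureSpace Ω'] [IsProbabilityMeasure (volume : Measure Ω')]
    (ν : Measure NNReal) [IsProbabilityMeasure ν]
    (te : G.E → Ω → NNReal) (hmeas : ∀ e, Measurable (te e))
    (hindep : iIndepFun te (volume : Measure Ω))
    (hident : ∀ e, Measure.map (te e) (volume : Measure Ω) = ν)
    (te' : G.E → Ω' → NNReal) (hmeas' : ∀ e, Measurable (te' e))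
    (hindep' : iIndepFun te' (volume : Measure Ω'))
    (hident' : ∀ e, Measure.map (te' e) (volume : Measure Ω') = ν)
    (hmom : minMoment ν G.edgeConn d < ⊤)
    (c : EuclideanSpace ℝ (Fin d) → G.V) (hc : ∀ p, R.IsClosest p (c p))
    (c' : EuclideanSpace ℝ (Fin d) → G.V) (hc' : ∀ p, R'.IsClosest p (c' p))
    (μ μ' : EuclideanSpace ℝ (Fin d) → ℝ)
    (hμcont : Continuous μ) (hμcont' : Continuous μ')
    (hμ : ∀ x ∈ R.ratPoints,
      ∀ᵐ ω ∂(volume : Measure Ω),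
        Tendsto
          (fun n : ℕ => (fpt (fun e => te e ω) (c 0) (c ((n : ℝ) • x))).toReal / n)
          atTop (𝓝 (μ x)))
    (hμ' : ∀ x ∈ R'.ratPoints,
      ∀ᵐ ω ∂(volume : Measure Ω'),
        Tendsto
          (fun n : ℕ => (fpt (fun e => te' e ω) (c' 0) (c' ((n : ℝ) • x))).toReal / n)
          atTop (𝓝 (μ' x))) :
    {x : EuclideanSpace ℝ (Fin d) | μ x ≤ 1} = {x : EuclideanSpace ℝ (Fin d) | μ' x ≤ 1} := by
  classical
  haveI : Countable G.E := C.countable_E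
  have hrat' : R'.ratPoints = R.ratPoints := by
    have hΓ : R'.Γ = R.Γ := by
      unfold PeriodicRealization.Γ; rw [hρ]
    unfold PeriodicRealization.ratPoints; rw [hΓ]
  have hkey : ∀ x ∈ R.ratPoints, μ x = μ' x := by
    intro x hx
    obtain ⟨N, hN, hmemΓ⟩ := hx
    obtain ⟨σ, hσ⟩ := hmemΓ
    have hxrat : x ∈ R.ratPoints := ⟨N, hN, σ, hσ⟩
    -- the translation parameters
    set τ : ℕ → Fin d → ℤ := fun n => (n / N) • σ with hτdef
    have hdecomp : ∀ n : ℕ, (n : ℝ) • x = ((n % N : ℕ) : ℝ) • x + R.ρ (τ n) := by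
      intro n
      rw [hτdef, R.rho_nsmul, hσ, smul_smul, ← add_smul]
      congr 1
      conv_lhs => rw [← Nat.div_add_mod n N]
      push_cast
      ring
    have hdecomp' : ∀ n : ℕ, (n : ℝ) • x = ((n % N : ℕ) : ℝ) • x + R'.ρ (τ n) := by
      intro n; rw [← hρ]; exact hdecomp n
    -- translated closest vertices
    set u : ℕ → G.V := fun n => C.vact (-(τ n)) (c ((n : ℝ) • x)) with hudef
    set u' : ℕ → G.V := fun n => C.vact (-(τ n)) (c' ((n : ℝ) • x)) with hu'def
    have hclosest_u : ∀ n, R.IsClosest (((n % N : ℕ) : ℝ) • x) (u n) := by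
      intro n
      apply R.isClosest_translate
      rw [← hdecomp n]
      exact hc _
    have hclosest_u' : ∀ n, R'.IsClosest (((n % N : ℕ) : ℝ) • x) (u' n) := by
      intro n
      apply R'.isClosest_translate
      rw [← hdecomp' n]
      exact hc' _
    have hvu : ∀ n, C.vact (τ n) (u n) = c ((n : ℝ) • x) := by
      intro n
      rw [hudef]
      rw [← C.vact_add, add_neg_cancel, C.vact_zero]
    have hvu' : ∀ n, C.vact (τ n) (u' n) = c' ((n : ℝ) • x) := by
      intro n
      rw [hu'def]
      rw [← C.vact_add, add_neg_cancel, C.vact_zero]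
    -- finite sets of closest vertices
    set F : ℕ → Set G.V := fun r => {v | R.IsClosest ((r : ℝ) • x) v} with hFdef
    set F' : ℕ → Set G.V := fun r => {v | R'.IsClosest ((r : ℝ) • x) v} with hF'def
    have hFfin : ∀ r, (F r).Finite := fun r =>
      Set.Finite.subset (R.finite_ball ((r : ℝ) • x) (dist (R.Φ v₀) ((r : ℝ) • x)))
        (fun v hv => hv v₀)
    have hF'fin : ∀ r, (F' r).Finite := fun r =>
      Set.Finite.subset (R'.finite_ball ((r : ℝ) • x) (dist (R'.Φ v₀) ((r : ℝ) • x)))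
        (fun v hv => hv v₀)
    set T : Set (G.V × G.V) := ⋃ r ∈ Finset.range N, F r ×ˢ F' r with hTdef
    have hTfin : T.Finite :=
      Set.Finite.biUnion (Finset.finite_toSet _) fun r _ => (hFfin r).prod (hF'fin r)
    have hpairT : ∀ n, (u n, u' n) ∈ T := by
      intro n
      refine Set.mem_iUnion₂.mpr ⟨n % N, Finset.mem_range.mpr (Nat.mod_lt n hN), ?_⟩
      exact Set.mem_prod.mpr ⟨hclosest_u n, hclosest_u' n⟩
    -- walks and tail probabilities
    have Wchoice : ∀ a b : G.V, G.Walk a b := fun a b => (C.conn a b).some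
    set Z : G.V × G.V → Ω' → NNReal :=
      fun p ω => walkTime (configMap te' ω) (Wchoice p.1 p.2) with hZdef
    have hZmeas : ∀ p, Measurable (Z p) := fun p =>
      (measurable_walkTime _).comp (measurable_configMap hmeas')
    set q : G.V × G.V → ℕ → ENNReal :=
      fun p m => (volume : Measure Ω') {ω | (m : ℝ) < (Z p ω : ℝ)} with hqdef
    have hqten : ∀ p, Tendsto (q p) atTop (𝓝 0) := fun p =>
      tendsto_measure_gt (Z p) (hZmeas p)
    have hhalfpos : ∀ j : ℕ, (0 : ENNReal) < (2⁻¹ : ENNReal) ^ (j + 1) := by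
      intro j
      apply ENNReal.pow_pos
      simp
    have huniform : ∀ j : ℕ, ∃ M : ℕ, ∀ p ∈ T, ∀ m, M ≤ m →
        q p m < (2⁻¹ : ENNReal) ^ (j + 1) := by
      intro j
      have hev : ∀ᶠ m in atTop, ∀ p ∈ T, q p m < (2⁻¹ : ENNReal) ^ (j + 1) := by
        refine (eventually_all_finite hTfin).mpr fun p hp => ?_
        exact (hqten p).eventually_lt_const (hhalfpos j)
      obtain ⟨M, hM⟩ := eventually_atTop.mp hev
      exact ⟨M, fun p hp m hm => hM m hm p hp⟩
    choose M hM using huniform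
    set nseq : ℕ → ℕ := fun j => (j + 1) * (M j + 1) with hnseqdef
    have hnge : ∀ j, j + 1 ≤ nseq j := fun j =>
      Nat.le_mul_of_pos_right _ (Nat.succ_pos _)
    have hnten : Tendsto nseq atTop atTop :=
      tendsto_atTop_mono (fun j => le_trans (Nat.le_succ j) (hnge j)) tendsto_id
    have hnpos : ∀ j, (0 : ℝ) < (nseq j : ℝ) := fun j => by
      have : 0 < nseq j := lt_of_lt_of_le (Nat.succ_pos j) (hnge j)
      exact_mod_cast this
    -- bad events and the Borel-Cantelli argument
    set s : ℕ → Set Ω' := fun j => {ω | ((nseq j : ℝ)) / ((j : ℝ) + 1) <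
      (fpt (configMap te' ω) (c ((nseq j : ℝ) • x)) (c' ((nseq j : ℝ) • x))).toReal} with hsdef
    have hsbound : ∀ j, (volume : Measure Ω') (s j) ≤ (2⁻¹ : ENNReal) ^ (j + 1) := by
      intro j
      set n := nseq j with hn
      set thr : ℝ := ((nseq j : ℝ)) / ((j : ℝ) + 1) with hthrdef
      have hstep1 : s j ⊆ {ω | thr <
          ((walkTime ((configMap te' ω) ∘ C.eact (τ n)) (Wchoice (u n) (u' n)) : NNReal) : ℝ)} := by
        intro ω hω
        have hle : fpt (configMap te' ω) (c ((n : ℝ) • x)) (c' ((n : ℝ) • x)) ≤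
            ((walkTime ((configMap te' ω) ∘ C.eact (τ n)) (Wchoice (u n) (u' n)) : NNReal) :
              ENNReal) := by
          rw [← hvu n, ← hvu' n]
          have h2 := fpt_le_walkTime (configMap te' ω) (actWalk C (τ n) (Wchoice (u n) (u' n)))
          rwa [walkTime_actWalk] at h2
        have h3 : (fpt (configMap te' ω) (c ((n : ℝ) • x)) (c' ((n : ℝ) • x))).toReal ≤
            ((walkTime ((configMap te' ω) ∘ C.eact (τ n)) (Wchoice (u n) (u' n)) : NNReal) : ℝ) := by
          have := ENNReal.toReal_mono ENNReal.coe_ne_top hle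
          rwa [ENNReal.coe_toReal] at this
        exact lt_of_lt_of_le hω h3
      set A : Set (G.E → NNReal) :=
        {t | thr < ((walkTime t (Wchoice (u n) (u' n)) : NNReal) : ℝ)} with hAdef
      have hAmeas : MeasurableSet A :=
        measurableSet_lt measurable_const (measurable_coe_nnreal_real.comp (measurable_walkTime _))
      have heactinj : Function.Injective (C.eact (τ n)) := by
        intro a b hab
        have := congrArg (C.eact (-(τ n))) hab
        rwa [C.eact_cancel, C.eact_cancel] at this
      have hstep2 : (volume : Measure Ω') {ω | thr <
          ((walkTime ((configMap te' ω) ∘ C.eact (τ n)) (Wchoice (u n) (u' n)) : NNReal) : ℝ)}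
          = (volume : Measure Ω') {ω | thr < (Z (u n, u' n) ω : ℝ)} := by
        have h4 : {ω : Ω' | thr <
            ((walkTime ((configMap te' ω) ∘ C.eact (τ n)) (Wchoice (u n) (u' n)) : NNReal) : ℝ)}
            = configMap (fun e => te' (C.eact (τ n) e)) ⁻¹' A := rfl
        have h5 : {ω : Ω' | thr < (Z (u n, u' n) ω : ℝ)} = configMap te' ⁻¹' A := rfl
        rw [h4, h5]
        exact measure_config_preimage_eq ν (fun e => hmeas' _)
          (iIndepFun_precomp (C.eact (τ n)) heactinj hindep') (fun e => hident' _)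
          hmeas' hindep' hident' hAmeas
      have hthr : thr = (M j : ℝ) + 1 := by
        rw [hthrdef, hnseqdef]
        push_cast
        rw [mul_comm, mul_div_assoc, div_self (by positivity : ((j : ℝ) + 1) ≠ 0), mul_one]
      have hstep3 : {ω : Ω' | thr < (Z (u n, u' n) ω : ℝ)} ⊆
          {ω : Ω' | ((M j : ℕ) : ℝ) < (Z (u n, u' n) ω : ℝ)} := by
        intro ω hω
        simp only [Set.mem_setOf_eq] at hω ⊢
        refine lt_of_le_of_lt ?_ hω
        rw [hthr]
        linarith
      calc (volume : Measure Ω') (s j) ≤ (volume : Measure Ω') {ω | thr <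
            ((walkTime ((configMap te' ω) ∘ C.eact (τ n)) (Wchoice (u n) (u' n)) : NNReal) : ℝ)} :=
            measure_mono hstep1
        _ = (volume : Measure Ω') {ω | thr < (Z (u n, u' n) ω : ℝ)} := hstep2
        _ ≤ (volume : Measure Ω') {ω | ((M j : ℕ) : ℝ) < (Z (u n, u' n) ω : ℝ)} :=
            measure_mono hstep3
        _ = q (u n, u' n) (M j) := rfl
        _ ≤ (2⁻¹ : ENNReal) ^ (j + 1) := le_of_lt (hM j _ (hpairT n) (M j) le_rfl)
    have hsum : (∑' j, (volume : Measure Ω') (s j)) ≠ ⊤ := by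
      have hle : (∑' j, (volume : Measure Ω') (s j)) ≤ ∑' j, (2⁻¹ : ENNReal) ^ (j + 1) :=
        ENNReal.tsum_le_tsum hsbound
      have hgeo : (∑' j : ℕ, (2⁻¹ : ENNReal) ^ (j + 1)) = 2⁻¹ * (1 - 2⁻¹)⁻¹ :=
        ENNReal.tsum_geometric_add_one 2⁻¹
      refine ne_top_of_le_ne_top ?_ hle
      rw [hgeo]
      have h12 : (1 : ENNReal) - 2⁻¹ = 2⁻¹ := by
        rw [ENNReal.one_sub_inv_two]
      rw [h12]
      simp [ENNReal.inv_ne_top]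
    have hBC : ∀ᵐ ω ∂(volume : Measure Ω'), ∀ᶠ j in atTop, ω ∉ s j :=
      ae_eventually_notMem hsum
    -- transfer of the almost sure convergence from Ω to Ω'
    set A2 : Set (G.E → NNReal) := {t | Tendsto
      (fun n : ℕ => (fpt t (c 0) (c ((n : ℝ) • x))).toReal / n) atTop (𝓝 (μ x))} with hA2def
    have hA2meas : MeasurableSet A2 := by
      apply measurableSet_tendsto
      intro n
      exact ((measurable_fpt _ _).ennreal_toReal).div_const _
    have hE2 : ∀ᵐ ω ∂(volume : Measure Ω'), configMap te' ω ∈ A2 := by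
      have h1 : ∀ᵐ ω ∂(volume : Measure Ω), configMap te ω ∈ A2 := hμ x hxrat
      rw [ae_iff] at h1 ⊢
      have hpre : {ω : Ω | ¬ configMap te ω ∈ A2} = configMap te ⁻¹' A2ᶜ := rfl
      have hpre' : {ω : Ω' | ¬ configMap te' ω ∈ A2} = configMap te' ⁻¹' A2ᶜ := rfl
      rw [hpre'] at *
      rw [hpre] at h1
      rw [← measure_config_preimage_eq ν hmeas hindep hident hmeas' hindep' hident' hA2meas.compl]
      exact h1
    have hE1 : ∀ᵐ ω ∂(volume : Measure Ω'), Tendsto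
        (fun n : ℕ => (fpt (configMap te' ω) (c' 0) (c' ((n : ℝ) • x))).toReal / n)
        atTop (𝓝 (μ' x)) := by
      have := hμ' x (by rw [hrat']; exact hxrat)
      exact this
    obtain ⟨ω, ⟨hb, ha⟩, hd⟩ := ((hE1.and hE2).and hBC).exists
    -- deterministic conclusion for the chosen ω
    set t0 : G.E → NNReal := configMap te' ω with ht0def
    have hfin : ∀ a b : G.V, fpt t0 a b ≠ ⊤ := fun a b => fpt_ne_top _ (C.conn a b)
    have ha' : Tendsto (fun j : ℕ =>
        (fpt t0 (c 0) (c ((nseq j : ℝ) • x))).toReal / (nseq j : ℝ)) atTop (𝓝 (μ x)) :=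
      ha.comp hnten
    have hb' : Tendsto (fun j : ℕ =>
        (fpt t0 (c' 0) (c' ((nseq j : ℝ) • x))).toReal / (nseq j : ℝ)) atTop (𝓝 (μ' x)) :=
      hb.comp hnten
    have hDev : ∀ᶠ j in atTop,
        (fpt t0 (c ((nseq j : ℝ) • x)) (c' ((nseq j : ℝ) • x))).toReal / (nseq j : ℝ)
          ≤ 1 / ((j : ℝ) + 1) := by
      filter_upwards [hd] with j hj
      have hj2 : (fpt t0 (c ((nseq j : ℝ) • x)) (c' ((nseq j : ℝ) • x))).toReal ≤
          ((nseq j : ℝ)) / ((j : ℝ) + 1) := not_lt.mp hj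
      have h7 := (le_div_iff₀ (by positivity : (0:ℝ) < (j:ℝ) + 1)).mp hj2
      rw [div_le_div_iff₀ (hnpos j) (by positivity : (0:ℝ) < (j:ℝ) + 1), one_mul]
      exact h7
    -- limits of the auxiliary terms
    have hterm1 : Tendsto (fun j : ℕ => (fpt t0 (c' 0) (c 0)).toReal / (nseq j : ℝ))
        atTop (𝓝 0) :=
      Tendsto.div_atTop tendsto_const_nhds (tendsto_natCast_atTop_atTop.comp hnten)
    have hterm1' : Tendsto (fun j : ℕ => (fpt t0 (c 0) (c' 0)).toReal / (nseq j : ℝ))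
        atTop (𝓝 0) :=
      Tendsto.div_atTop tendsto_const_nhds (tendsto_natCast_atTop_atTop.comp hnten)
    have hterm3 : Tendsto (fun j : ℕ => 1 / ((j : ℝ) + 1)) atTop (𝓝 0) :=
      tendsto_one_div_add_atTop_nhds_zero_nat
    -- first direction : μ' x ≤ μ x
    have hg1 : Tendsto (fun j : ℕ => (fpt t0 (c' 0) (c 0)).toReal / (nseq j : ℝ)
        + (fpt t0 (c 0) (c ((nseq j : ℝ) • x))).toReal / (nseq j : ℝ) + 1 / ((j : ℝ) + 1))
        atTop (𝓝 (μ x)) := by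
      have := (hterm1.add ha').add hterm3
      simpa using this
    have hle1 : ∀ᶠ j in atTop,
        (fpt t0 (c' 0) (c' ((nseq j : ℝ) • x))).toReal / (nseq j : ℝ) ≤
        (fpt t0 (c' 0) (c 0)).toReal / (nseq j : ℝ)
        + (fpt t0 (c 0) (c ((nseq j : ℝ) • x))).toReal / (nseq j : ℝ) + 1 / ((j : ℝ) + 1) := by
      filter_upwards [hDev] with j hDj
      have t1 := fpt_triangle t0 (c' 0) (c ((nseq j : ℝ) • x)) (c' ((nseq j : ℝ) • x))
      have t2 := fpt_triangle t0 (c' 0) (c 0) (c ((nseq j : ℝ) • x))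
      have htri := t1.trans (add_le_add_left t2 _)
      have htr : (fpt t0 (c' 0) (c' ((nseq j : ℝ) • x))).toReal ≤
          (fpt t0 (c' 0) (c 0)).toReal + (fpt t0 (c 0) (c ((nseq j : ℝ) • x))).toReal
          + (fpt t0 (c ((nseq j : ℝ) • x)) (c' ((nseq j : ℝ) • x))).toReal :=
        toReal_le_add3 htri (hfin _ _) (hfin _ _) (hfin _ _)
      have h8 : (fpt t0 (c' 0) (c' ((nseq j : ℝ) • x))).toReal / (nseq j : ℝ) ≤
          (fpt t0 (c' 0) (c 0)).toReal / (nseq j : ℝ)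
          + (fpt t0 (c 0) (c ((nseq j : ℝ) • x))).toReal / (nseq j : ℝ)
          + (fpt t0 (c ((nseq j : ℝ) • x)) (c' ((nseq j : ℝ) • x))).toReal / (nseq j : ℝ) := by
        rw [← add_div, ← add_div]
        exact (div_le_div_iff_of_pos_right (hnpos j)).mpr htr
      exact h8.trans (add_le_add_right hDj _)
    have hdir1 : μ' x ≤ μ x := le_of_tendsto_of_tendsto hb' hg1 hle1
    -- second direction : μ x ≤ μ' x
    have hg2 : Tendsto (fun j : ℕ => (fpt t0 (c 0) (c' 0)).toReal / (nseq j : ℝ)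
        + (fpt t0 (c' 0) (c' ((nseq j : ℝ) • x))).toReal / (nseq j : ℝ) + 1 / ((j : ℝ) + 1))
        atTop (𝓝 (μ' x)) := by
      have := (hterm1'.add hb').add hterm3
      simpa using this
    have hle2 : ∀ᶠ j in atTop,
        (fpt t0 (c 0) (c ((nseq j : ℝ) • x))).toReal / (nseq j : ℝ) ≤
        (fpt t0 (c 0) (c' 0)).toReal / (nseq j : ℝ)
        + (fpt t0 (c' 0) (c' ((nseq j : ℝ) • x))).toReal / (nseq j : ℝ) + 1 / ((j : ℝ) + 1) := by
      filter_upwards [hDev] with j hDj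
      have t1 := fpt_triangle t0 (c 0) (c' ((nseq j : ℝ) • x)) (c ((nseq j : ℝ) • x))
      have t2 := fpt_triangle t0 (c 0) (c' 0) (c' ((nseq j : ℝ) • x))
      have htri := t1.trans (add_le_add_left t2 _)
      rw [fpt_symm t0 (c' ((nseq j : ℝ) • x)) (c ((nseq j : ℝ) • x))] at htri
      have htr : (fpt t0 (c 0) (c ((nseq j : ℝ) • x))).toReal ≤
          (fpt t0 (c 0) (c' 0)).toReal + (fpt t0 (c' 0) (c' ((nseq j : ℝ) • x))).toReal
          + (fpt t0 (c ((nseq j : ℝ) • x)) (c' ((nseq j : ℝ) • x))).toReal :=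
        toReal_le_add3 htri (hfin _ _) (hfin _ _) (hfin _ _)
      have h8 : (fpt t0 (c 0) (c ((nseq j : ℝ) • x))).toReal / (nseq j : ℝ) ≤
          (fpt t0 (c 0) (c' 0)).toReal / (nseq j : ℝ)
          + (fpt t0 (c' 0) (c' ((nseq j : ℝ) • x))).toReal / (nseq j : ℝ)
          + (fpt t0 (c ((nseq j : ℝ) • x)) (c' ((nseq j : ℝ) • x))).toReal / (nseq j : ℝ) := by
        rw [← add_div, ← add_div]
        exact (div_le_div_iff_of_pos_right (hnpos j)).mpr htr
      exact h8.trans (add_le_add_right hDj _)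
    have hdir2 : μ x ≤ μ' x := le_of_tendsto_of_tendsto ha' hg2 hle2
    linarith
  -- from equality on rational points to equality everywhere
  have hall : ∀ y, μ y = μ' y := by
    intro y
    obtain ⟨f, hmem, hf⟩ := ratPoints_dense R y
    have h1 : Tendsto (fun n => μ (f n)) atTop (𝓝 (μ y)) := (hμcont.tendsto y).comp hf
    have h2 : Tendsto (fun n => μ' (f n)) atTop (𝓝 (μ' y)) := (hμcont'.tendsto y).comp hf
    have heq : (fun n => μ (f n)) = fun n => μ' (f n) := funext fun n => hkey _ (hmem n)
    rw [heq] at h1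
    exact tendsto_nhds_unique h1 h2
  ext z
  simp only [Set.mem_setOf_eq, hall z]

end FPPCL
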